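/- Let A ∈ ℝ^{n×n}, B ∈ ℝ^{n×p}, and K ∈ ℝ^{p×n} be such that the spectral radius of A+BK is strictly less than 1, and let 0 < ε < 1. Then there exist m ∈ ℕ_{>0} and nonnegative reals σ₁,…,σ_m with (σ₁+⋯+σ_m)/m ≥ 1 such that the matrix I − ε·I − Σ_{j=1}^{m} (σ_j/m) · ((A+BK)^j)ᵀ (A+BK)^j is positive semidefinite. -/

import Mathlib

open Matrix Finset Filter

attribute [local instance] Matrix.linftyOpNormedRing Matrix.linftyOpNormedAlgebra

lemma pow_entry_small {n : ℕ} (M : Matrix (Fin n) (Fin n) ℝ)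
    (hρ : ∀ μ ∈ spectrum ℂ (M.map (algebraMap ℝ ℂ)), ‖μ‖ < 1)
    (δ : ℝ) (hδ : 0 < δ) :
    ∃ k, 0 < k ∧ ∀ i j, |(M ^ k) i j| ≤ δ := by
  rcases Nat.eq_zero_or_pos n with hn | hn
  · exact ⟨1, one_pos, fun i => absurd i.2 (by omega)⟩
  haveI : Nonempty (Fin n) := ⟨⟨0, hn⟩⟩
  set Mc := M.map (algebraMap ℝ ℂ) with hMc
  have hrad : spectralRadius ℂ Mc < 1 := by
    have := spectrum.spectralRadius_lt_of_forall_lt (a := Mc) (r := 1)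
      (fun z hz => by simpa using (show ‖z‖₊ < 1 from by rw [← NNReal.coe_lt_coe, coe_nnnorm]; simpa using hρ z hz))
    simpa using this
  obtain ⟨s, hs1, hs2⟩ := exists_between hrad
  have hGel := spectrum.pow_nnnorm_pow_one_div_tendsto_nhds_spectralRadius Mc
  have hev := hGel.eventually_lt_const hs1
  have hstop : s ≠ ⊤ := (hs2.trans_le le_top).ne
  set c : ℝ := s.toReal with hc
  have hc1 : c < 1 := by
    rw [hc]
    exact ENNReal.toReal_lt_of_lt_ofReal (by simpa [ENNReal.ofReal_one] using hs2)
  have hc0 : 0 ≤ c := ENNReal.toReal_nonneg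
  have hbound : ∀ᶠ k : ℕ in atTop, ‖Mc ^ k‖ < c ^ k := by
    filter_upwards [hev, eventually_ge_atTop 1] with k hk hk1
    have hk0 : (k : ℝ) ≠ 0 := Nat.cast_ne_zero.mpr (by omega)
    have h2 : ((‖Mc ^ k‖₊ : ENNReal) ^ (1 / (k:ℝ))) ^ (k:ℝ) < s ^ (k:ℝ) :=
      ENNReal.rpow_lt_rpow hk (by positivity)
    rw [← ENNReal.rpow_mul, one_div, inv_mul_cancel₀ hk0, ENNReal.rpow_one] at h2
    have hfin : s ^ (k:ℝ) ≠ ⊤ := ENNReal.rpow_ne_top_of_nonneg (by positivity) hstop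
    have h3 : ‖Mc ^ k‖ < (s ^ (k:ℝ)).toReal := by
      have := (ENNReal.toReal_lt_toReal ENNReal.coe_ne_top hfin).mpr h2
      simpa using this
    calc ‖Mc ^ k‖ < (s ^ (k:ℝ)).toReal := h3
    _ = c ^ k := by rw [← ENNReal.toReal_rpow, Real.rpow_natCast]
  have hsm : ∀ᶠ k : ℕ in atTop, c ^ k < δ :=
    (tendsto_pow_atTop_nhds_zero_of_lt_one hc0 hc1).eventually_lt_const hδ
  obtain ⟨k, hk1, hbk, hsk⟩ := ((eventually_ge_atTop 1).and (hbound.and hsm)).exists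
  refine ⟨k, by omega, fun i j => ?_⟩
  have hmap : (M ^ k).map (algebraMap ℝ ℂ) = Mc ^ k := by
    rw [hMc]; simpa using map_pow (RingHom.mapMatrix (algebraMap ℝ ℂ)) M k
  have hentry : ‖(Mc ^ k) i j‖₊ ≤ ‖Mc ^ k‖₊ := by
    rw [Matrix.linfty_opNNNorm_def]
    exact le_trans (Finset.single_le_sum (f := fun j => ‖(Mc ^ k) i j‖₊)
      (fun _ _ => zero_le) (mem_univ j))
      (Finset.le_sup (f := fun i => ∑ j : Fin n, ‖(Mc ^ k) i j‖₊) (mem_univ i))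
  have heq : (Mc ^ k) i j = ((M ^ k) i j : ℂ) := by
    rw [← hmap]; rfl
  have : |(M ^ k) i j| ≤ ‖Mc ^ k‖ := by
    have := hentry
    rw [← NNReal.coe_le_coe] at this
    simpa [heq, Real.norm_eq_abs] using this
  exact this.trans (hbk.le.trans hsk.le)

/-- Feasibility of the LMI for flexible-step MPC: if ρ(A+BK) < 1 and 0 < ε < 1,
then there exist m > 0 and nonnegative weights σ₁,…,σ_m with average ≥ 1 such that
I − εI − Σ_j (σ_j/m) ((A+BK)^j)ᵀ (A+BK)^j ⪰ 0. -/
theorem stmt_2 {n p : ℕ} (A : Matrix (Fin n) (Fin n) ℝ) (B : Matrix (Fin n) (Fin p) ℝ)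
    (K : Matrix (Fin p) (Fin n) ℝ)
    (hρ : ∀ μ ∈ spectrum ℂ ((A + B * K).map (algebraMap ℝ ℂ)), ‖μ‖ < 1)
    (ε : ℝ) (hε0 : 0 < ε) (hε1 : ε < 1) :
    ∃ (m : ℕ), 0 < m ∧ ∃ σ : Fin m → ℝ, (∀ j, 0 ≤ σ j) ∧
      (∑ j, σ j) / (m : ℝ) ≥ 1 ∧
      ((1 : Matrix (Fin n) (Fin n) ℝ) - ε • (1 : Matrix (Fin n) (Fin n) ℝ)
        - ∑ j : Fin m, (σ j / (m : ℝ)) •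
            (((A + B * K) ^ ((j : ℕ) + 1))ᵀ * (A + B * K) ^ ((j : ℕ) + 1))).PosSemidef := by
  set M := A + B * K with hMdef
  have h1ε : 0 < 1 - ε := by linarith
  set δ : ℝ := Real.sqrt (1 - ε) / ((n : ℝ) + 1) with hδdef
  have hδ : 0 < δ := by positivity
  obtain ⟨m, hm, hent⟩ := pow_entry_small M hρ δ hδ
  have hm0 : (m : ℝ) ≠ 0 := Nat.cast_ne_zero.mpr hm.ne'
  set i0 : Fin m := ⟨m - 1, by omega⟩ with hi0def
  refine ⟨m, hm, fun j => if j = i0 then (m : ℝ) else 0, ?_, ?_, ?_⟩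
  · intro j; dsimp only; split <;> positivity
  · rw [Finset.sum_ite_eq' univ i0 (fun _ => (m : ℝ))]
    simp [div_self hm0]
  · set N := M ^ m with hN
    have hpow : (i0 : ℕ) + 1 = m := by simp [hi0def]; omega
    have hsum : (∑ j : Fin m, ((if j = i0 then (m : ℝ) else 0) / (m : ℝ)) •
        ((M ^ ((j : ℕ) + 1))ᵀ * M ^ ((j : ℕ) + 1))) = Nᵀ * N := by
      rw [Finset.sum_eq_single i0]
      · rw [if_pos rfl, div_self hm0, one_smul, hpow]
      · intro b _ hb
        rw [if_neg hb, zero_div, zero_smul]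
      · intro h; exact absurd (mem_univ i0) h
    rw [hsum]
    have key : ∀ x : Fin n → ℝ, (N *ᵥ x) ⬝ᵥ (N *ᵥ x) ≤ (1 - ε) * (x ⬝ᵥ x) := by
      intro x
      have hδ2 : δ ^ 2 = (1 - ε) / ((n : ℝ) + 1) ^ 2 := by
        rw [hδdef, div_pow, Real.sq_sqrt h1ε.le]
      have hxx : x ⬝ᵥ x = ∑ j, (x j) ^ 2 := by simp [dotProduct, sq]
      have hx0 : 0 ≤ ∑ j, (x j) ^ 2 := Finset.sum_nonneg fun j _ => sq_nonneg _
      have hyi : ∀ i, (N *ᵥ x) i ^ 2 ≤ δ ^ 2 * ((n : ℝ) * ∑ j, (x j) ^ 2) := by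
        intro i
        have h1 : |(N *ᵥ x) i| ≤ δ * ∑ j, |x j| := by
          calc |(N *ᵥ x) i| = |∑ j, N i j * x j| := by
                rw [Matrix.mulVec, dotProduct]
          _ ≤ ∑ j, |N i j * x j| := Finset.abs_sum_le_sum_abs _ _
          _ ≤ ∑ j, δ * |x j| := Finset.sum_le_sum (fun j _ => by
                rw [abs_mul]; exact mul_le_mul_of_nonneg_right (hent i j) (abs_nonneg _))
          _ = δ * ∑ j, |x j| := by rw [Finset.mul_sum]
        have h2 : (N *ᵥ x) i ^ 2 ≤ (δ * ∑ j, |x j|) ^ 2 := by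
          rw [← sq_abs]
          exact pow_le_pow_left₀ (abs_nonneg _) h1 2
        have h3 : (∑ j, |x j|) ^ 2 ≤ (n : ℝ) * ∑ j, (x j) ^ 2 := by
          have := sq_sum_le_card_mul_sum_sq (s := (univ : Finset (Fin n)))
            (f := fun j => |x j|)
          simpa [sq_abs] using this
        calc (N *ᵥ x) i ^ 2 ≤ (δ * ∑ j, |x j|) ^ 2 := h2
        _ = δ ^ 2 * (∑ j, |x j|) ^ 2 := by ring
        _ ≤ δ ^ 2 * ((n : ℝ) * ∑ j, (x j) ^ 2) :=
            mul_le_mul_of_nonneg_left h3 (sq_nonneg δ)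
      have hc : (n : ℝ) ^ 2 * δ ^ 2 ≤ 1 - ε := by
        rw [hδ2, div_eq_mul_inv]
        have hn0 : (0:ℝ) ≤ (n:ℝ) := Nat.cast_nonneg n
        have h : (n:ℝ)^2 ≤ ((n:ℝ)+1)^2 := by nlinarith
        calc (n:ℝ)^2 * ((1-ε) * ((((n:ℝ)+1)^2)⁻¹))
            ≤ ((n:ℝ)+1)^2 * ((1-ε) * ((((n:ℝ)+1)^2)⁻¹)) := by
              apply mul_le_mul_of_nonneg_right h; positivity
        _ = 1 - ε := by field_simp
      calc (N *ᵥ x) ⬝ᵥ (N *ᵥ x) = ∑ i, (N *ᵥ x) i ^ 2 := by simp [dotProduct, sq]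
      _ ≤ ∑ _i : Fin n, δ ^ 2 * ((n : ℝ) * ∑ j, (x j) ^ 2) :=
          Finset.sum_le_sum (fun i _ => hyi i)
      _ = (n : ℝ) ^ 2 * δ ^ 2 * ∑ j, (x j) ^ 2 := by
          rw [Finset.sum_const, Finset.card_univ, Fintype.card_fin, nsmul_eq_mul]; ring
      _ ≤ (1 - ε) * (x ⬝ᵥ x) := by
          rw [hxx]
          exact mul_le_mul_of_nonneg_right hc hx0
    rw [posSemidef_iff_dotProduct_mulVec]
    constructor
    · have hH : (Nᵀ * N).IsHermitian := by
        have := isHermitian_conjTranspose_mul_self N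
        rwa [conjTranspose_eq_transpose_of_trivial] at this
      have hs : (ε • (1 : Matrix (Fin n) (Fin n) ℝ)).IsHermitian := by
        show (ε • (1 : Matrix (Fin n) (Fin n) ℝ))ᴴ = _
        rw [Matrix.conjTranspose_smul, star_trivial, Matrix.conjTranspose_one]
      exact (isHermitian_one.sub hs).sub hH
    · intro x
      rw [star_trivial]
      rw [sub_mulVec, sub_mulVec, one_mulVec, smul_mulVec, one_mulVec,
        dotProduct_sub, dotProduct_sub, dotProduct_smul,
        ← mulVec_mulVec, dotProduct_mulVec, vecMul_transpose]
      have hx0 : 0 ≤ x ⬝ᵥ x := by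
        simp only [dotProduct]
        exact Finset.sum_nonneg fun j _ => mul_self_nonneg _
      have := key x
      simp only [smul_eq_mul]
      linarith
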